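/- Let T be a tree and x, y, z three vertices with edges xy and yz in T. Then 2 f_T(y) > f_T(x) + f_T(z), where f_T(w) denotes the number of subtrees of T containing w. -/

import Mathlib

open SimpleGraph

section Aux

variable {V : Type*} {G : SimpleGraph V}

lemma induce_singleton_connected (y : V) : (G.induce {y}).Connected := by
  have hpre : (G.induce ({y} : Set V)).Preconnected := by
    rintro ⟨a, ha⟩ ⟨b, hb⟩
    simp only [Set.mem_singleton_iff] at ha hb
    subst ha; subst hb
    exact SimpleGraph.Reachable.refl _
  rw [SimpleGraph.connected_iff]
  exact ⟨hpre, ⟨⟨y, rfl⟩⟩⟩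

lemma induce_insert_connected {S : Set V} {s w : V} (hS : (G.induce S).Connected)
    (hs : s ∈ S) (hadj : G.Adj s w) : (G.induce (insert w S)).Connected := by
  have h1 : (G.induce ({s, w} : Set V)).Connected := induce_pair_connected_of_adj hadj
  have h2 : ({s, w} : Set V) ∪ S = insert w S := by
    ext v
    simp only [Set.mem_union, Set.mem_insert_iff, Set.mem_singleton_iff]
    constructor
    · rintro (⟨rfl | rfl⟩ | h) <;> tauto
    · tauto
  have := induce_union_connected h1.preconnected hS.preconnected ⟨s, by simp, hs⟩
  rwa [h2] at this

lemma exists_walk_in {S : Set V} (hS : (G.induce S).Connected) {a b : V}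
    (ha : a ∈ S) (hb : b ∈ S) : ∃ p : G.Walk a b, ∀ v ∈ p.support, v ∈ S := by
  obtain ⟨w⟩ := hS ⟨a, ha⟩ ⟨b, hb⟩
  refine ⟨w.map (SimpleGraph.Embedding.induce S).toHom, ?_⟩
  intro v hv
  have hv' : v ∈ (w.map (SimpleGraph.Embedding.induce S).toHom).support := hv
  rw [SimpleGraph.Walk.support_map, List.mem_map] at hv'
  obtain ⟨⟨u, hu⟩, -, rfl⟩ := hv'
  exact hu

/-- In a tree, a connected set avoiding `y` cannot contain both neighbors `x, z` of `y`. -/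
lemma not_both_sides (hG : G.IsTree) {x y z : V} (hxy : G.Adj x y) (hyz : G.Adj y z)
    (hxz : x ≠ z) {S : Set V} (hS : (G.induce S).Connected) (hy : y ∉ S)
    (hx : x ∈ S) : z ∉ S := by
  classical
  intro hz
  obtain ⟨p, hp⟩ := exists_walk_in hS hx hz
  have hq : ∀ v ∈ (p.toPath : G.Walk x z).support, v ∈ S :=
    fun v hv => hp v (SimpleGraph.Walk.support_toPath_subset p hv)
  -- the canonical path x - y - z
  have hpp : (SimpleGraph.Walk.cons hxy (SimpleGraph.Walk.cons hyz SimpleGraph.Walk.nil)).IsPath := by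
    simp [SimpleGraph.Walk.isPath_def, hxy.ne, hyz.ne, hxz]
  have huniq := hG.existsUnique_path x z
  obtain ⟨w₀, -, hu⟩ := huniq
  have h1 : (p.toPath : G.Walk x z) = w₀ := hu _ p.toPath.2
  have h2 : (SimpleGraph.Walk.cons hxy (SimpleGraph.Walk.cons hyz SimpleGraph.Walk.nil)) = w₀ :=
    hu _ hpp
  have : y ∈ (p.toPath : G.Walk x z).support := by
    rw [h1, ← h2]; simp
  exact hy (hq y this)

end Aux

/-- The number of subtrees of `G` containing the vertex `v`. -/
noncomputable def numSubtreesContaining {V : Type*} [Fintype V] (G : SimpleGraph V) (v : V) : ℕ :=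
  {S : Set V | v ∈ S ∧ (G.induce S).Connected}.ncard

theorem two_mul_middle_gt {V : Type*} [Fintype V] (G : SimpleGraph V)
    (hG : G.IsTree) (x y z : V) (hxy : G.Adj x y) (hyz : G.Adj y z) (hxz : x ≠ z) :
    numSubtreesContaining G x + numSubtreesContaining G z <
      2 * numSubtreesContaining G y := by
  classical
  set Ax : Set (Set V) := {S | x ∈ S ∧ (G.induce S).Connected} with hAx
  set Ay : Set (Set V) := {S | y ∈ S ∧ (G.induce S).Connected} with hAy
  set Az : Set (Set V) := {S | z ∈ S ∧ (G.induce S).Connected} with hAz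
  have hxy' : x ≠ y := hxy.ne
  have hyz' : y ≠ z := hyz.ne
  -- split Ax and Az by membership of y
  set P : Set (Set V) := {S ∈ Ax | y ∈ S} with hP
  set Q : Set (Set V) := {S ∈ Ax | y ∉ S} with hQ
  set R : Set (Set V) := {S ∈ Az | y ∈ S} with hR
  set W : Set (Set V) := {S ∈ Az | y ∉ S} with hW
  have hAxPQ : Ax = P ∪ Q := by
    ext S; by_cases h : y ∈ S <;> simp [hP, hQ, hAx, h]
  have hAzRW : Az = R ∪ W := by
    ext S; by_cases h : y ∈ S <;> simp [hR, hW, hAz, h]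
  have hdPQ : Disjoint P Q := by
    rw [Set.disjoint_left]; rintro S ⟨-, h⟩ ⟨-, h'⟩; exact h' h
  have hdRW : Disjoint R W := by
    rw [Set.disjoint_left]; rintro S ⟨-, h⟩ ⟨-, h'⟩; exact h' h
  -- images under insert y
  set Q' : Set (Set V) := (insert y) '' Q with hQ'
  set W' : Set (Set V) := (insert y) '' W with hW'
  have hinjQ : Set.InjOn (insert y) Q := by
    rintro S ⟨-, hS⟩ T ⟨-, hT⟩ h
    have : insert y S \ {y} = insert y T \ {y} := by rw [h]
    simpa [Set.insert_diff_self_of_notMem, hS, hT] using this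
  have hinjW : Set.InjOn (insert y) W := by
    rintro S ⟨-, hS⟩ T ⟨-, hT⟩ h
    have : insert y S \ {y} = insert y T \ {y} := by rw [h]
    simpa [Set.insert_diff_self_of_notMem, hS, hT] using this
  -- Q' elements: contain y and x, are connected
  have hQ'sub : Q' ⊆ Ay \ {({y} : Set V)} := by
    rintro _ ⟨S, ⟨⟨hxS, hconn⟩, hyS⟩, rfl⟩
    refine ⟨⟨Set.mem_insert _ _, induce_insert_connected hconn hxS hxy⟩, ?_⟩
    simp only [Set.mem_singleton_iff]
    intro h
    have : x ∈ ({y} : Set V) := h ▸ Set.mem_insert_iff.mpr (Or.inr hxS)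
    exact hxy' this
  have hW'sub : W' ⊆ Ay \ {({y} : Set V)} := by
    rintro _ ⟨S, ⟨⟨hzS, hconn⟩, hyS⟩, rfl⟩
    refine ⟨⟨Set.mem_insert _ _, induce_insert_connected hconn hzS hyz.symm⟩, ?_⟩
    simp only [Set.mem_singleton_iff]
    intro h
    have : z ∈ ({y} : Set V) := h ▸ Set.mem_insert_iff.mpr (Or.inr hzS)
    exact hyz' this.symm
  have hPsub : P ⊆ Ay \ {({y} : Set V)} := by
    rintro S ⟨⟨hxS, hconn⟩, hyS⟩
    refine ⟨⟨hyS, hconn⟩, ?_⟩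
    simp only [Set.mem_singleton_iff]
    rintro rfl
    exact hxy' hxS
  have hRsub : R ⊆ Ay \ {({y} : Set V)} := by
    rintro S ⟨⟨hzS, hconn⟩, hyS⟩
    refine ⟨⟨hyS, hconn⟩, ?_⟩
    simp only [Set.mem_singleton_iff]
    rintro rfl
    exact hyz' hzS.symm
  -- disjointness of P and W', R and Q' (key tree separation)
  have hdPW' : Disjoint P W' := by
    rw [Set.disjoint_left]
    rintro _ ⟨⟨hxS, hconn⟩, hyS⟩ ⟨S, ⟨⟨hzS, hconn'⟩, hyS'⟩, rfl⟩
    -- S contains z, not y, connected; insert y S contains x, so x ∈ S (x ≠ y)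
    have hxS' : x ∈ S := by
      rcases Set.mem_insert_iff.mp hxS with h | h
      · exact absurd h hxy'
      · exact h
    exact not_both_sides hG hxy hyz hxz hconn' hyS' hxS' hzS
  have hdRQ' : Disjoint R Q' := by
    rw [Set.disjoint_left]
    rintro _ ⟨⟨hzS, hconn⟩, hyS⟩ ⟨S, ⟨⟨hxS, hconn'⟩, hyS'⟩, rfl⟩
    have hzS' : z ∈ S := by
      rcases Set.mem_insert_iff.mp hzS with h | h
      · exact absurd h.symm hyz'
      · exact h
    exact not_both_sides hG hxy hyz hxz hconn' hyS' hxS hzS'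
  -- counting
  have hyAy : ({y} : Set V) ∈ Ay := ⟨rfl, induce_singleton_connected y⟩
  have hfin : ∀ T : Set (Set V), T.Finite := fun T => Set.toFinite T
  have hcardQ' : Q'.ncard = Q.ncard := Set.ncard_image_of_injOn hinjQ
  have hcardW' : W'.ncard = W.ncard := Set.ncard_image_of_injOn hinjW
  have hcAx : Ax.ncard = P.ncard + Q.ncard := by
    rw [hAxPQ]; exact Set.ncard_union_eq hdPQ (hfin P) (hfin Q)
  have hcAz : Az.ncard = R.ncard + W.ncard := by
    rw [hAzRW]; exact Set.ncard_union_eq hdRW (hfin R) (hfin W)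
  have h1 : P.ncard + W'.ncard ≤ (Ay \ {({y} : Set V)}).ncard := by
    rw [← Set.ncard_union_eq hdPW' (hfin P) (hfin W')]
    exact Set.ncard_le_ncard (Set.union_subset hPsub hW'sub) (hfin _)
  have h2 : R.ncard + Q'.ncard ≤ (Ay \ {({y} : Set V)}).ncard := by
    rw [← Set.ncard_union_eq hdRQ' (hfin R) (hfin Q')]
    exact Set.ncard_le_ncard (Set.union_subset hRsub hQ'sub) (hfin _)
  have hdiff : (Ay \ {({y} : Set V)}).ncard = Ay.ncard - 1 :=
    Set.ncard_diff_singleton_of_mem hyAy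
  have hAypos : 0 < Ay.ncard := (Set.ncard_pos (hfin Ay)).mpr ⟨_, hyAy⟩
  have hfx : numSubtreesContaining G x = Ax.ncard := rfl
  have hfy : numSubtreesContaining G y = Ay.ncard := rfl
  have hfz : numSubtreesContaining G z = Az.ncard := rfl
  rw [hfx, hfy, hfz, hcAx, hcAz]
  omega
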